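/- Let n ≥ 3, let u₀ ∈ ℝⁿ be a unit vector, and let K and L be nonempty compact convex subsets of ℝⁿ. If the orthogonal projections of K and L onto the hyperplane u^⊥ coincide (K_u = L_u) for every unit vector u orthogonal to u₀, then K = L. -/

import Mathlib

open MeasureTheory Pointwise

/-- Orthogonal projection of `x` onto the hyperplane `u ^⊥` (for `u` a unit vector). -/
noncomputable def projHyperplane {n : ℕ} (u : EuclideanSpace ℝ (Fin n))
    (x : EuclideanSpace ℝ (Fin n)) : EuclideanSpace ℝ (Fin n) :=
  x - (inner ℝ x u : ℝ) • u

lemma inner_projHyperplane {n : ℕ} (u v x : EuclideanSpace ℝ (Fin n))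
    (hvu : (inner ℝ v u : ℝ) = 0) : (inner ℝ v (projHyperplane u x) : ℝ) = inner ℝ v x := by
  simp [projHyperplane, inner_sub_right, inner_smul_right, real_inner_comm v u, hvu]

lemma aux_subset (n : ℕ) (hn : 3 ≤ n) (u₀ : EuclideanSpace ℝ (Fin n))
    (K L : Set (EuclideanSpace ℝ (Fin n)))
    (hL : IsClosed L) (hLc : Convex ℝ L)
    (h : ∀ u : EuclideanSpace ℝ (Fin n), ‖u‖ = 1 → (inner ℝ u u₀ : ℝ) = 0 →
      projHyperplane u '' K ⊆ projHyperplane u '' L) :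
    K ⊆ L := by
  intro x hx
  by_contra hxL
  obtain ⟨f, s, hfs, hsx⟩ := geometric_hahn_banach_closed_point hLc hL hxL
  set v := (InnerProductSpace.toDual ℝ _).symm f with hv
  have hvf : ∀ y, (inner ℝ v y : ℝ) = f y := fun y => InnerProductSpace.toDual_symm_apply
  set V := Submodule.span ℝ ({u₀, v} : Set (EuclideanSpace ℝ (Fin n))) with hV
  have hsing : ∀ z : EuclideanSpace ℝ (Fin n),
      Module.finrank ℝ (Submodule.span ℝ ({z} : Set (EuclideanSpace ℝ (Fin n)))) ≤ 1 := by
    intro z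
    by_cases hz : z = 0
    · rw [hz, Submodule.span_zero_singleton]
      simp
    · rw [finrank_span_singleton hz]
  have hVle : Module.finrank ℝ V ≤ 2 := by
    rw [hV, show ({u₀, v} : Set (EuclideanSpace ℝ (Fin n))) = insert u₀ {v} from rfl,
      Submodule.span_insert]
    have := Submodule.finrank_sup_add_finrank_inf_eq
      (Submodule.span ℝ ({u₀} : Set (EuclideanSpace ℝ (Fin n))))
      (Submodule.span ℝ ({v} : Set (EuclideanSpace ℝ (Fin n))))
    have h1 := hsing u₀
    have h2 := hsing v
    omega
  have hdim : Module.finrank ℝ (EuclideanSpace ℝ (Fin n)) = n := by simp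
  have hpos : 0 < Module.finrank ℝ Vᗮ := by
    have := V.finrank_add_finrank_orthogonal
    omega
  obtain ⟨w', hw'V, hw'⟩ : ∃ w' ∈ Vᗮ, w' ≠ 0 := by
    have hne : Vᗮ ≠ ⊥ := by
      intro hb
      rw [hb] at hpos
      simp [finrank_bot] at hpos
    obtain ⟨b, hb, hb0⟩ := Submodule.exists_mem_ne_zero_of_ne_bot hne
    exact ⟨b, hb, hb0⟩
  set w := ‖w'‖⁻¹ • w' with hw
  have hwV : w ∈ Vᗮ := Vᗮ.smul_mem _ hw'V
  have hwnorm : ‖w‖ = 1 := norm_smul_inv_norm hw'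
  have hwu₀ : (inner ℝ w u₀ : ℝ) = 0 := by
    have := (Submodule.mem_orthogonal V w).mp hwV u₀
      (Submodule.subset_span (by simp))
    rwa [real_inner_comm] at this
  have hvw : (inner ℝ v w : ℝ) = 0 :=
    (Submodule.mem_orthogonal V w).mp hwV v (Submodule.subset_span (by simp))
  obtain ⟨y, hyL, hyx⟩ := h w hwnorm hwu₀ ⟨x, hx, rfl⟩
  have : (inner ℝ v y : ℝ) = inner ℝ v x := by
    rw [← inner_projHyperplane w v y hvw, hyx, inner_projHyperplane w v x hvw]
  have h1 : f y < s := hfs y hyL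
  rw [← hvf, this, hvf] at h1
  exact absurd (h1.trans hsx) (lt_irrefl _)

theorem equal_projections_in_directions_orthogonal_to_fixed_vector (n : ℕ) (hn : 3 ≤ n)
    (u₀ : EuclideanSpace ℝ (Fin n)) (hu₀ : ‖u₀‖ = 1)
    (K L : Set (EuclideanSpace ℝ (Fin n)))
    (hK : IsCompact K) (hKc : Convex ℝ K) (hKne : K.Nonempty)
    (hL : IsCompact L) (hLc : Convex ℝ L) (hLne : L.Nonempty)
    (h : ∀ u : EuclideanSpace ℝ (Fin n), ‖u‖ = 1 → (inner ℝ u u₀ : ℝ) = 0 →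
      projHyperplane u '' K = projHyperplane u '' L) :
    K = L := by
  apply Set.Subset.antisymm
  · exact aux_subset n hn u₀ K L hL.isClosed hLc fun u h1 h2 => (h u h1 h2).le
  · exact aux_subset n hn u₀ L K hK.isClosed hKc fun u h1 h2 => (h u h1 h2).ge
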